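/- Let δ ∈ {−1,1} and α, β, ζ⁺, ζ⁻, η⁺, η⁻, χ⁺, χ⁻ ∈ ℝ with Ω := βδ + α > 0, αδ < 0, and δ(ζ⁻+χ⁻) − α(ζ⁺+χ⁺) ≠ 0. For p₁ > 0 and p₂, p₃ ∈ ℝ define a₂(p₁,p₂,p₃) := ((α−δ)·p₁²/(16Ω²))·((β+1)²(δζ⁻ − αζ⁺) − (α−δ)²(η⁻ + βη⁺)) + ((β+1)·p₂/(16Ω))·(δχ⁻ − αχ⁺) + (1/8)·(p₃/(p₁(α−δ)) − p₂²/(p₁²(α−δ)) − (β+1)p₂/Ω)·(δ(ζ⁻+χ⁻) − α(ζ⁺+χ⁺)). Then for every c ∈ ℝ there exist p₁ > 0 and p₂, p₃ ∈ ℝ with a₂(p₁,p₂,p₃) = c; in particular a₂ attains negative, zero and positive values. -/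

import Mathlib

/-- Theorem 8.2: the leading-order first Lyapunov coefficient `a₂` of the Hopf
bifurcation, as a function of the derivatives `p₁ = φ'`, `p₂ = φ''`, `p₃ = φ'''` of the
regularization function at the equilibrium height, attains every real value (in
particular negative, zero and positive values), provided
`δ(ζ⁻+χ⁻) − α(ζ⁺+χ⁺) ≠ 0`. -/
theorem lyapunov_coefficient_attains_all_values
    (δ α β ζp ζm ηp ηm χp χm : ℝ)
    (hδ : δ = -1 ∨ δ = 1) (hΩ : 0 < β * δ + α) (hαδ : α * δ < 0)
    (hne : δ * (ζm + χm) - α * (ζp + χp) ≠ 0) :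
    ∀ c : ℝ, ∃ p₁ p₂ p₃ : ℝ, 0 < p₁ ∧
      ((α - δ) * p₁ ^ 2 / (16 * (β * δ + α) ^ 2))
          * ((β + 1) ^ 2 * (δ * ζm - α * ζp) - (α - δ) ^ 2 * (ηm + β * ηp))
        + ((β + 1) * p₂ / (16 * (β * δ + α))) * (δ * χm - α * χp)
        + (1 / 8) * (p₃ / (p₁ * (α - δ)) - p₂ ^ 2 / (p₁ ^ 2 * (α - δ))
            - (β + 1) * p₂ / (β * δ + α))
          * (δ * (ζm + χm) - α * (ζp + χp)) = c := by
  intro c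
  have hαδne : α - δ ≠ 0 := by
    rcases hδ with h | h <;> subst h <;> nlinarith
  set K := δ * (ζm + χm) - α * (ζp + χp) with hK
  set A := ((α - δ) * (1:ℝ) ^ 2 / (16 * (β * δ + α) ^ 2))
      * ((β + 1) ^ 2 * (δ * ζm - α * ζp) - (α - δ) ^ 2 * (ηm + β * ηp)) with hA
  refine ⟨1, 0, (c - A) * 8 * (α - δ) / K, one_pos, ?_⟩
  have h1 : ((c - A) * 8 * (α - δ) / K) / ((1:ℝ) * (α - δ)) = (c - A) * 8 / K := by
    rw [one_mul, div_div, mul_div_assoc, mul_comm K (α - δ), ← div_div,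
      mul_div_assoc, div_self hαδne]; ring
  rw [h1]
  have h2 : (1:ℝ)/8 * ((c - A) * 8 / K - 0 ^ 2 / ((1:ℝ) ^ 2 * (α - δ)) - (β + 1) * 0 / (β * δ + α)) * K = c - A := by
    field_simp
    ring
  rw [h2]
  ring
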